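/- arXiv:2009.13749 — 2 statements merged into one kernel-verified Lean document; each statement's English description precedes it below -/
import Mathlib

section
/- Let Σ = [[X, Yᵀ],[Y, U]] ∈ ℝ^{(d+k)×(d+k)} be a symmetric positive semidefinite block matrix with X ∈ ℝ^{d×d}, Y ∈ ℝ^{k×d}, U ∈ ℝ^{k×k}. Suppose X ⪰ σ²I for some σ > 0 and Tr(Σ) ≤ ν. Then X is invertible and the matrix K = Y X⁻¹ satisfies ‖K‖ ≤ √ν/σ in spectral norm. -/
open Matrix

/-- Spectral (ℓ₂ operator) norm of a real matrix. -/
noncomputable def sNorm {m n : Type*} [Fintype m] [Fintype n] [DecidableEq n]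
    (M : Matrix m n ℝ) : ℝ :=
  ‖LinearMap.toContinuousLinearMap (Matrix.toEuclideanLin M)‖

/-- Frobenius norm of a real matrix. -/
noncomputable def fNorm {m n : Type*} [Fintype m] [Fintype n] (M : Matrix m n ℝ) : ℝ :=
  Real.sqrt (Matrix.trace (Mᵀ * M))

/-- `K` is `(κ,γ)`-strongly stable for the pair `(A,B)`. -/
def StronglyStable {d k : ℕ} (A : Matrix (Fin d) (Fin d) ℝ) (B : Matrix (Fin d) (Fin k) ℝ)
    (K : Matrix (Fin k) (Fin d) ℝ) (κ γ : ℝ) : Prop :=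
  0 < κ ∧ 0 < γ ∧ γ ≤ 1 ∧ sNorm K ≤ κ ∧
    ∃ H L : Matrix (Fin d) (Fin d) ℝ, IsUnit H ∧ A + B * K = H * L * H⁻¹ ∧
      sNorm L ≤ 1 - γ ∧ sNorm H * sNorm H⁻¹ ≤ κ

/-- The feasible set of the SDP relaxation of LQ control. -/
def Feasible {d k : ℕ} (A : Matrix (Fin d) (Fin d) ℝ) (B : Matrix (Fin d) (Fin k) ℝ)
    (W : Matrix (Fin d) (Fin d) ℝ) (ν : ℝ)
    (Sg : Matrix (Fin d ⊕ Fin k) (Fin d ⊕ Fin k) ℝ) : Prop :=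
  Sg.PosSemidef ∧ Sg.trace ≤ ν ∧
    Sg.toBlocks₁₁ = fromCols A B * Sg * (fromCols A B)ᵀ + W

/-- The controller `K = Σ_{xu}ᵀ Σ_{xx}⁻¹` extracted from an SDP point. -/
noncomputable def extractK {d k : ℕ} (Sg : Matrix (Fin d ⊕ Fin k) (Fin d ⊕ Fin k) ℝ) :
    Matrix (Fin k) (Fin d) ℝ :=
  (Sg.toBlocks₁₂)ᵀ * (Sg.toBlocks₁₁)⁻¹

/-- The exploration covariance `V = Σ_{uu} - K Σ_{xx} Kᵀ` extracted from an SDP point. -/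
noncomputable def extractV {d k : ℕ} (Sg : Matrix (Fin d ⊕ Fin k) (Fin d ⊕ Fin k) ℝ) :
    Matrix (Fin k) (Fin k) ℝ :=
  Sg.toBlocks₂₂ - extractK Sg * Sg.toBlocks₁₁ * (extractK Sg)ᵀ

section Aux
open scoped Matrix.Norms.L2Operator

lemma sNorm_eq_l2norm {m n : Type*} [Fintype m] [Fintype n] [DecidableEq n]
    (M : Matrix m n ℝ) : sNorm M = ‖M‖ := rfl

lemma sNorm_transpose {m n : Type*} [Fintype m] [Fintype n] [DecidableEq m] [DecidableEq n]
    (M : Matrix m n ℝ) : sNorm Mᵀ = sNorm M := by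
  rw [sNorm_eq_l2norm, sNorm_eq_l2norm, ← Matrix.l2_opNorm_conjTranspose M,
    Matrix.conjTranspose_eq_transpose_of_trivial]

end Aux

lemma psd_smul {n : Type*} [Fintype n] {A : Matrix n n ℝ} (hA : A.PosSemidef) {c : ℝ}
    (hc : 0 ≤ c) : (c • A).PosSemidef := by
  refine .of_dotProduct_mulVec_nonneg ?_ fun x => ?_
  · rw [Matrix.IsHermitian, Matrix.conjTranspose_smul, hA.1.eq, star_trivial]
  · rw [Matrix.smul_mulVec, dotProduct_smul, smul_eq_mul]
    exact mul_nonneg hc (hA.dotProduct_mulVec_nonneg x)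

lemma psd_trace_nonneg {n : Type*} [Fintype n] [DecidableEq n] {A : Matrix n n ℝ}
    (hA : A.PosSemidef) : 0 ≤ A.trace := by
  rw [Matrix.trace]
  refine Finset.sum_nonneg fun i _ => ?_
  have := hA.dotProduct_mulVec_nonneg (Pi.single i 1)
  simpa [dotProduct, Matrix.mulVec, Pi.single_apply, mul_ite, ite_mul,
    Finset.sum_ite_eq, Finset.sum_ite_eq'] using this

lemma psd_quad_le_trace {n : Type*} [Fintype n] [DecidableEq n] {A : Matrix n n ℝ}
    (hA : A.PosSemidef) (x : n → ℝ) : x ⬝ᵥ A *ᵥ x ≤ A.trace * (x ⬝ᵥ x) := by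
  obtain ⟨B, rfl⟩ : ∃ B : Matrix n n ℝ, A = Bᴴ * B := by
    open scoped MatrixOrder in
    exact CStarAlgebra.nonneg_iff_eq_star_mul_self.mp hA.nonneg
  have h1 : x ⬝ᵥ (Bᴴ * B) *ᵥ x = (B *ᵥ x) ⬝ᵥ (B *ᵥ x) := by
    rw [← Matrix.mulVec_mulVec, Matrix.dotProduct_mulVec, Matrix.vecMul_conjTranspose]
    simp
  rw [h1]
  have h2 : (Bᴴ * B).trace = ∑ i, ∑ j, (B i j) ^ 2 := by
    rw [Matrix.trace, Finset.sum_comm]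
    simp [Matrix.diag, Matrix.mul_apply, sq]
  rw [h2, Finset.sum_mul]
  unfold dotProduct Matrix.mulVec
  refine Finset.sum_le_sum fun i _ => ?_
  have := Finset.sum_mul_sq_le_sq_mul_sq Finset.univ (fun j => B i j) x
  calc (∑ j, B i j * x j) * (∑ j, B i j * x j) = (∑ j, B i j * x j) ^ 2 := (sq _).symm
    _ ≤ (∑ j, (B i j) ^ 2) * ∑ j, (x j) ^ 2 := this
    _ = (∑ j, (B i j) ^ 2) * ∑ j, x j * x j := by simp [sq]

lemma psd_smul_one_sub {n : Type*} [Fintype n] [DecidableEq n] {A : Matrix n n ℝ}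
    (hA : A.PosSemidef) {ν : ℝ} (h : A.trace ≤ ν) :
    (ν • (1 : Matrix n n ℝ) - A).PosSemidef := by
  refine .of_dotProduct_mulVec_nonneg ?_ fun x => ?_
  · rw [Matrix.IsHermitian, Matrix.conjTranspose_sub, Matrix.conjTranspose_smul, hA.1.eq,
      Matrix.conjTranspose_one, star_trivial]
  · rw [Matrix.sub_mulVec, dotProduct_sub, Matrix.smul_mulVec,
      Matrix.one_mulVec, dotProduct_smul, smul_eq_mul, sub_nonneg, star_trivial]
    calc x ⬝ᵥ A *ᵥ x ≤ A.trace * (x ⬝ᵥ x) := psd_quad_le_trace hA x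
      _ ≤ ν * (x ⬝ᵥ x) := by
          apply mul_le_mul_of_nonneg_right h
          simpa [dotProduct, sq] using Finset.sum_nonneg fun j _ => mul_self_nonneg (x j)

lemma sNorm_le_sqrt {m n : Type*} [Fintype m] [Fintype n] [DecidableEq n] {M : Matrix m n ℝ}
    {c : ℝ} (h : (c • (1 : Matrix n n ℝ) - Mᵀ * M).PosSemidef) :
    sNorm M ≤ Real.sqrt c := by
  unfold sNorm
  refine ContinuousLinearMap.opNorm_le_bound _ (Real.sqrt_nonneg c) fun x => ?_
  set v : n → ℝ := (WithLp.equiv 2 (n → ℝ)) x with hv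
  have hq := h.dotProduct_mulVec_nonneg v
  rw [star_trivial, Matrix.sub_mulVec, dotProduct_sub, Matrix.smul_mulVec,
    Matrix.one_mulVec, dotProduct_smul, smul_eq_mul, sub_nonneg] at hq
  have hq2 : v ⬝ᵥ (Mᵀ * M) *ᵥ v = (M *ᵥ v) ⬝ᵥ (M *ᵥ v) := by
    rw [← Matrix.mulVec_mulVec, Matrix.dotProduct_mulVec, Matrix.vecMul_transpose]
  rw [hq2] at hq
  have hnx : ‖x‖ = Real.sqrt (v ⬝ᵥ v) := by
    rw [EuclideanSpace.norm_eq]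
    congr 1
    simp only [Real.norm_eq_abs, sq, abs_mul_abs_self, dotProduct]
    rfl
  have hfx : ‖LinearMap.toContinuousLinearMap (Matrix.toEuclideanLin M) x‖ =
      Real.sqrt ((M *ᵥ v) ⬝ᵥ (M *ᵥ v)) := by
    rw [EuclideanSpace.norm_eq]
    congr 1
    simp only [Real.norm_eq_abs, sq, abs_mul_abs_self, dotProduct]
    rfl
  have hvv : (0:ℝ) ≤ v ⬝ᵥ v := Finset.sum_nonneg fun j _ => mul_self_nonneg (v j)
  rw [hfx, hnx, ← Real.sqrt_mul' _ hvv]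
  exact Real.sqrt_le_sqrt hq


/-- norm bound for the controller extracted from a PSD block matrix with
`X ⪰ σ²I` and trace at most `ν`. -/
theorem stmt5 {d k : ℕ} (X : Matrix (Fin d) (Fin d) ℝ) (Y : Matrix (Fin k) (Fin d) ℝ)
    (U : Matrix (Fin k) (Fin k) ℝ) (σ ν : ℝ) (hσ : 0 < σ)
    (hPSD : (fromBlocks X Yᵀ Y U).PosSemidef)
    (hX : (X - σ ^ 2 • (1 : Matrix (Fin d) (Fin d) ℝ)).PosSemidef)
    (htr : (fromBlocks X Yᵀ Y U).trace ≤ ν) :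
    IsUnit X ∧ sNorm (Y * X⁻¹) ≤ Real.sqrt ν / σ := by
  have hsq : (0:ℝ) < σ^2 := by positivity
  have hXpd : X.PosDef := by
    have h1 : (σ^2 • (1 : Matrix (Fin d) (Fin d) ℝ)).PosDef := by
      rw [Matrix.smul_one_eq_diagonal]
      exact Matrix.posDef_diagonal_iff.mpr fun i => hsq
    have h2 := Matrix.PosDef.posSemidef_add hX h1
    rwa [sub_add_cancel] at h2
  have hXunit : IsUnit X := hXpd.isUnit
  haveI : Invertible X := hXunit.invertible
  have hdet : IsUnit X.det := (Matrix.isUnit_iff_isUnit_det X).mp hXunit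
  have hXinvmul : X⁻¹ * X = 1 := Matrix.nonsing_inv_mul X hdet
  have hSchur : (U - Y * X⁻¹ * Yᵀ).PosSemidef := by
    have h : (fromBlocks X Yᵀ (Yᵀ)ᴴ U).PosSemidef := by
      simpa [Matrix.conjTranspose_eq_transpose_of_trivial] using hPSD
    have h2 := (Matrix.PosDef.fromBlocks₁₁ Yᵀ U hXpd).mp h
    simpa [Matrix.conjTranspose_eq_transpose_of_trivial] using h2
  have hU : U.PosSemidef := by
    have h := hPSD.submatrix (Sum.inr : Fin k → Fin d ⊕ Fin k)
    have e : (fromBlocks X Yᵀ Y U).submatrix (Sum.inr : Fin k → Fin d ⊕ Fin k) Sum.inr = U := by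
      ext i j; rfl
    rwa [e] at h
  have htrX : 0 ≤ X.trace := psd_trace_nonneg hXpd.posSemidef
  have htrB : X.trace + U.trace ≤ ν := by
    have e : (fromBlocks X Yᵀ Y U).trace = X.trace + U.trace := by
      simp [Matrix.trace, Fintype.sum_sum_type, Matrix.diag]
    rwa [e] at htr
  have htrU : U.trace ≤ ν := by linarith
  have hν : 0 ≤ ν := by
    have := psd_trace_nonneg hU
    linarith
  have hU' : (ν • (1 : Matrix (Fin k) (Fin k) ℝ) - U).PosSemidef := psd_smul_one_sub hU htrU
  have hcomb : (ν • (1 : Matrix (Fin k) (Fin k) ℝ) - Y * X⁻¹ * Yᵀ).PosSemidef := by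
    have h := hU'.add hSchur
    rwa [sub_add_sub_cancel] at h
  set K := Y * X⁻¹ with hK
  have hXT : Xᵀ = X := by
    rw [← Matrix.conjTranspose_eq_transpose_of_trivial, hXpd.1.eq]
  have hXinvT : X⁻¹ᵀ = X⁻¹ := by rw [Matrix.transpose_nonsing_inv, hXT]
  have hKT : Kᵀ = X⁻¹ * Yᵀ := by rw [hK, Matrix.transpose_mul, hXinvT]
  have hKXK : K * X * Kᵀ = Y * X⁻¹ * Yᵀ := by
    rw [hKT, hK]
    calc Y * X⁻¹ * X * (X⁻¹ * Yᵀ) = Y * (X⁻¹ * X) * (X⁻¹ * Yᵀ) := by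
          rw [Matrix.mul_assoc Y X⁻¹ X]
      _ = Y * (X⁻¹ * Yᵀ) := by rw [hXinvmul, Matrix.mul_one]
      _ = Y * X⁻¹ * Yᵀ := by rw [Matrix.mul_assoc]
  have hc0 : (0:ℝ) ≤ (σ^2)⁻¹ := by positivity
  have h5 : ((σ^2)⁻¹ • X - 1).PosSemidef := by
    have h := psd_smul hX hc0
    rwa [smul_sub, smul_smul, inv_mul_cancel₀ hsq.ne', one_smul] at h
  have h6 : (K * ((σ^2)⁻¹ • X - 1) * Kᴴ).PosSemidef := h5.mul_mul_conjTranspose_same K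
  have h6' : ((σ^2)⁻¹ • (Y * X⁻¹ * Yᵀ) - K * Kᵀ).PosSemidef := by
    have e : K * ((σ^2)⁻¹ • X - 1) * Kᴴ = (σ^2)⁻¹ • (K * X * Kᵀ) - K * Kᵀ := by
      rw [Matrix.conjTranspose_eq_transpose_of_trivial]
      rw [Matrix.mul_sub, Matrix.sub_mul, Matrix.mul_one]
      rw [Matrix.mul_smul, Matrix.smul_mul]
    rw [e, hKXK] at h6
    exact h6
  have h7 : (((σ^2)⁻¹ * ν) • (1 : Matrix (Fin k) (Fin k) ℝ) - K * Kᵀ).PosSemidef := by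
    have h8 := (psd_smul hcomb hc0).add h6'
    have e : (σ^2)⁻¹ • (ν • (1 : Matrix (Fin k) (Fin k) ℝ) - Y * X⁻¹ * Yᵀ) +
        ((σ^2)⁻¹ • (Y * X⁻¹ * Yᵀ) - K * Kᵀ) =
        ((σ^2)⁻¹ * ν) • (1 : Matrix (Fin k) (Fin k) ℝ) - K * Kᵀ := by
      rw [smul_sub, smul_smul]
      abel
    rwa [e] at h8
  refine ⟨hXunit, ?_⟩
  have h9 : sNorm Kᵀ ≤ Real.sqrt ((σ^2)⁻¹ * ν) := by
    apply sNorm_le_sqrt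
    rwa [Matrix.transpose_transpose]
  rw [← sNorm_transpose K]
  calc sNorm Kᵀ ≤ Real.sqrt ((σ^2)⁻¹ * ν) := h9
    _ = Real.sqrt ν / σ := by
        rw [Real.sqrt_mul (by positivity), Real.sqrt_inv, Real.sqrt_sq hσ.le, inv_mul_eq_div]
end

section
/- Let K ∈ ℝ^{k×d} be (κ,γ)-strongly stable for (A,B) with κ ≥ 1, let M = A + BK, and let W ∈ ℝ^{d×d} be symmetric positive semidefinite with Tr(W) ≤ λ². Then the series X = Σ_{t=0}^∞ M^t W (Mᵀ)^t converges, X is the steady-state covariance (X = M X Mᵀ + W), and Tr(X) + Tr(K X Kᵀ) ≤ 2κ⁴λ²/γ. -/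
open Matrix

section L2
open scoped Matrix.Norms.L2Operator

set_option linter.unusedSectionVars false
variable {m n p : Type*} [Fintype m] [Fintype n] [Fintype p] [DecidableEq m] [DecidableEq n] [DecidableEq p]

lemma sNorm_eq (M : Matrix m n ℝ) : sNorm M = ‖M‖ := rfl

lemma sNorm_nonneg (M : Matrix m n ℝ) : 0 ≤ sNorm M := by
  rw [sNorm_eq]; exact norm_nonneg _

lemma sNorm_mul_le (A : Matrix m n ℝ) (B : Matrix n p ℝ) : sNorm (A * B) ≤ sNorm A * sNorm B := by
  simp only [sNorm_eq]; exact Matrix.l2_opNorm_mul A B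

lemma sNorm_mulVec (A : Matrix m n ℝ) (x : EuclideanSpace ℝ n) :
    ‖(EuclideanSpace.equiv m ℝ).symm (A *ᵥ x)‖ ≤ sNorm A * ‖x‖ := by
  rw [sNorm_eq]; exact Matrix.l2_opNorm_mulVec A x

lemma sNorm_le_bound (A : Matrix m n ℝ) {c : ℝ} (hc : 0 ≤ c)
    (h : ∀ x : EuclideanSpace ℝ n, ‖(EuclideanSpace.equiv m ℝ).symm (A *ᵥ x)‖ ≤ c * ‖x‖) :
    sNorm A ≤ c := by
  refine ContinuousLinearMap.opNorm_le_bound _ hc fun x => ?_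
  simpa [Matrix.toEuclideanLin_apply] using h x

lemma sNorm_one_le : sNorm (1 : Matrix n n ℝ) ≤ 1 := by
  refine sNorm_le_bound _ zero_le_one fun x => ?_
  rw [Matrix.one_mulVec]
  exact le_of_eq (one_mul _).symm

end L2

lemma eucl_norm_sq {n : Type*} [Fintype n] (v : n → ℝ) :
    ‖(EuclideanSpace.equiv n ℝ).symm v‖ ^ 2 = ∑ i, v i ^ 2 := by
  rw [EuclideanSpace.norm_eq, Real.sq_sqrt (by positivity)]
  refine Finset.sum_congr rfl fun i _ => ?_
  simp [Real.norm_eq_abs, sq_abs]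

lemma trace_mul_transpose_self {n m : Type*} [Fintype n] [Fintype m]
    (G : Matrix n m ℝ) : (G * Gᵀ).trace = ∑ j, ∑ i, (G i j) ^ 2 := by
  rw [Finset.sum_comm]
  simp [Matrix.trace, Matrix.diag, Matrix.mul_apply, sq]

lemma trace_mul_transpose_self_nonneg {n m : Type*} [Fintype n] [Fintype m]
    (G : Matrix n m ℝ) : 0 ≤ (G * Gᵀ).trace := by
  rw [trace_mul_transpose_self]; positivity

lemma entry_abs_le_trace {n m : Type*} [Fintype n] [Fintype m]
    (G : Matrix n m ℝ) (i j : n) : |(G * Gᵀ) i j| ≤ (G * Gᵀ).trace := by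
  have hrow : ∀ a : n, ∑ k, (G a k) ^ 2 ≤ (G * Gᵀ).trace := by
    intro a
    rw [trace_mul_transpose_self, Finset.sum_comm]
    exact Finset.single_le_sum (f := fun a => ∑ k, (G a k) ^ 2)
      (fun b _ => by positivity) (Finset.mem_univ a)
  have h1 : |(G * Gᵀ) i j| ≤ ∑ k, |G i k * G j k| := by
    rw [Matrix.mul_apply]
    simpa using Finset.abs_sum_le_sum_abs (fun k => G i k * Gᵀ k j) Finset.univ
  have h2 : ∀ k, |G i k * G j k| ≤ ((G i k) ^ 2 + (G j k) ^ 2) / 2 := by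
    intro k
    rw [abs_mul]
    nlinarith [abs_nonneg (G i k), abs_nonneg (G j k), sq_abs (G i k), sq_abs (G j k),
      sq_nonneg (|G i k| - |G j k|)]
  calc |(G * Gᵀ) i j| ≤ ∑ k, ((G i k) ^ 2 + (G j k) ^ 2) / 2 :=
        h1.trans (Finset.sum_le_sum fun k _ => h2 k)
    _ = ((∑ k, (G i k) ^ 2) + ∑ k, (G j k) ^ 2) / 2 := by
        rw [← Finset.sum_add_distrib, Finset.sum_div]
    _ ≤ (G * Gᵀ).trace := by
        have := hrow i; have := hrow j; linarith

lemma trace_sandwich_le {p d m : Type*} [Fintype p] [Fintype d] [Fintype m] [DecidableEq d] [DecidableEq p]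
    (N : Matrix p d ℝ) (G : Matrix d m ℝ) :
    ((N * G) * (N * G)ᵀ).trace ≤ sNorm N ^ 2 * (G * Gᵀ).trace := by
  rw [trace_mul_transpose_self, trace_mul_transpose_self, Finset.mul_sum]
  refine Finset.sum_le_sum fun j _ => ?_
  have hc : ∀ i, (N * G) i j = (N *ᵥ (EuclideanSpace.equiv d ℝ).symm fun k => G k j) i := by
    intro i
    simp [Matrix.mul_apply, Matrix.mulVec, dotProduct, EuclideanSpace.equiv,
      WithLp.equiv_symm_apply]
  have h1 : ∑ i, ((N * G) i j) ^ 2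
      = ‖(EuclideanSpace.equiv p ℝ).symm (N *ᵥ ((EuclideanSpace.equiv d ℝ).symm (fun k => G k j)))‖ ^ 2 := by
    rw [eucl_norm_sq]
    exact Finset.sum_congr rfl fun i _ => by rw [hc i]
  rw [h1]
  have h2 := sNorm_mulVec N ((EuclideanSpace.equiv d ℝ).symm (fun k => G k j))
  have h3 : 0 ≤ sNorm N * ‖(EuclideanSpace.equiv d ℝ).symm (fun k => G k j)‖ :=
    mul_nonneg (sNorm_nonneg N) (norm_nonneg _)
  calc ‖(EuclideanSpace.equiv p ℝ).symm (N *ᵥ ((EuclideanSpace.equiv d ℝ).symm fun k => G k j))‖ ^ 2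
      ≤ (sNorm N * ‖(EuclideanSpace.equiv d ℝ).symm (fun k => G k j)‖) ^ 2 :=
        pow_le_pow_left₀ (norm_nonneg _) h2 2
    _ = sNorm N ^ 2 * ∑ i, (G i j) ^ 2 := by
        rw [mul_pow, eucl_norm_sq]

/-- The linear map `Y ↦ P * Y * Pᵀ`. -/
def sandwichLM {p d : Type*} [Fintype p] [Fintype d] (P : Matrix p d ℝ) :
    Matrix d d ℝ →ₗ[ℝ] Matrix p p ℝ where
  toFun Y := P * Y * Pᵀ
  map_add' Y Z := by simp [Matrix.mul_add, Matrix.add_mul]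
  map_smul' c Y := by simp [Matrix.mul_smul, Matrix.smul_mul]


/-- for a (κ,γ)-strongly stable `K` (κ ≥ 1) and PSD noise covariance `W`
with `Tr W ≤ λ²`, the series `X = Σ_t M^t W (Mᵀ)^t` converges, solves the steady-state
equation, and `Tr X + Tr(K X Kᵀ) ≤ 2κ⁴λ²/γ`. -/
theorem stmt6 {d k : ℕ} (A : Matrix (Fin d) (Fin d) ℝ) (B : Matrix (Fin d) (Fin k) ℝ)
    (K : Matrix (Fin k) (Fin d) ℝ) (κ γ lam : ℝ) (hκ : 1 ≤ κ)
    (h : StronglyStable A B K κ γ)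
    (M : Matrix (Fin d) (Fin d) ℝ) (hM : M = A + B * K)
    (W : Matrix (Fin d) (Fin d) ℝ) (hW : W.PosSemidef) (htrW : W.trace ≤ lam ^ 2) :
    ∃ X : Matrix (Fin d) (Fin d) ℝ,
      HasSum (fun t : ℕ => M ^ t * W * (Mᵀ) ^ t) X ∧
      X = M * X * Mᵀ + W ∧
      X.trace + (K * X * Kᵀ).trace ≤ 2 * κ ^ 4 * lam ^ 2 / γ := by
  obtain ⟨hκ0, hγ0, hγ1, hK, H, L, hH, hMeq, hL, hHH⟩ := h
  have hMH : M = H * L * H⁻¹ := hM.trans hMeq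
  have hdet : IsUnit H.det := (Matrix.isUnit_iff_isUnit_det H).1 hH
  have hHinv : H⁻¹ * H = 1 := Matrix.nonsing_inv_mul H hdet
  have hHinv' : H * H⁻¹ = 1 := Matrix.mul_nonsing_inv H hdet
  have hpow : ∀ t, M ^ t = H * L ^ t * H⁻¹ := by
    intro t
    induction t with
    | zero => simp [hHinv']
    | succ t ih =>
      rw [pow_succ, ih, hMH, pow_succ]
      calc H * L ^ t * H⁻¹ * (H * L * H⁻¹)
          = H * L ^ t * (H⁻¹ * H) * L * H⁻¹ := by simp only [Matrix.mul_assoc]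
        _ = H * (L ^ t * L) * H⁻¹ := by
            rw [hHinv, Matrix.mul_one]; simp only [Matrix.mul_assoc]
  have hγ0' : (0:ℝ) ≤ 1 - γ := by linarith
  have hκ0' : (0:ℝ) ≤ κ := le_of_lt hκ0
  have hLt : ∀ t, sNorm (L ^ t) ≤ (1 - γ) ^ t := by
    intro t
    induction t with
    | zero => simpa using sNorm_one_le
    | succ t ih =>
      rw [pow_succ, pow_succ]
      exact (sNorm_mul_le _ _).trans (mul_le_mul ih hL (sNorm_nonneg L) (by positivity))
  have hMt : ∀ t, sNorm (M ^ t) ≤ κ * (1 - γ) ^ t := by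
    intro t
    rw [hpow t]
    calc sNorm (H * L ^ t * H⁻¹) ≤ sNorm (H * L ^ t) * sNorm H⁻¹ := sNorm_mul_le _ _
      _ ≤ sNorm H * sNorm (L ^ t) * sNorm H⁻¹ :=
          mul_le_mul_of_nonneg_right (sNorm_mul_le _ _) (sNorm_nonneg _)
      _ = sNorm H * sNorm H⁻¹ * sNorm (L ^ t) := by ring
      _ ≤ κ * (1 - γ) ^ t := mul_le_mul hHH (hLt t) (sNorm_nonneg _) hκ0'
  obtain ⟨C, hCsym, hCC⟩ : ∃ C : Matrix (Fin d) (Fin d) ℝ, Cᵀ = C ∧ C * C = W := by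
    open scoped MatrixOrder in
    exact ⟨CFC.sqrt W, by
      have := (CFC.sqrt_nonneg W).posSemidef.isHermitian
      rwa [Matrix.IsHermitian, Matrix.conjTranspose_eq_transpose_of_trivial] at this,
      CFC.sqrt_mul_sqrt_self W hW.nonneg⟩
  have hWCC : C * Cᵀ = W := by rw [hCsym, hCC]
  set f : ℕ → Matrix (Fin d) (Fin d) ℝ := fun t => M ^ t * W * Mᵀ ^ t with hf
  have hfG : ∀ t, f t = (M ^ t * C) * (M ^ t * C)ᵀ := by
    intro t
    simp only [hf, ← hCC, Matrix.transpose_mul, hCsym, Matrix.transpose_pow, Matrix.mul_assoc]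
  have hr0 : (0:ℝ) ≤ (1-γ)^2 := sq_nonneg _
  have hr1 : (1-γ)^2 < 1 := by nlinarith
  set r := (1-γ)^2 with hrdef
  have htrW0 : 0 ≤ W.trace := by rw [← hWCC]; exact trace_mul_transpose_self_nonneg C
  have hsq : ∀ t, (κ * (1-γ)^t)^2 = κ^2 * r^t := by
    intro t
    rw [hrdef, mul_pow, ← pow_mul, mul_comm t 2, pow_mul]
  have htr_f : ∀ t, (f t).trace ≤ κ^2 * lam^2 * r^t := by
    intro t
    rw [hfG t]
    calc ((M^t*C)*(M^t*C)ᵀ).trace ≤ sNorm (M^t)^2 * (C*Cᵀ).trace := trace_sandwich_le _ _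
      _ ≤ (κ*(1-γ)^t)^2 * lam^2 := by
          rw [hWCC]
          exact mul_le_mul (pow_le_pow_left₀ (sNorm_nonneg _) (hMt t) 2) htrW htrW0 (sq_nonneg _)
      _ = κ^2 * lam^2 * r^t := by rw [hsq t]; ring
  have htr_Kf : ∀ t, (K * f t * Kᵀ).trace ≤ κ^4 * lam^2 * r^t := by
    intro t
    have hrw : K * f t * Kᵀ = (K * M^t * C) * (K * M^t * C)ᵀ := by
      rw [hfG t]
      simp only [Matrix.transpose_mul, Matrix.mul_assoc]
    rw [hrw]
    have hKM : sNorm (K * M^t) ≤ κ * (κ * (1-γ)^t) :=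
      (sNorm_mul_le _ _).trans (mul_le_mul hK (hMt t) (sNorm_nonneg _) hκ0')
    calc ((K*M^t*C)*(K*M^t*C)ᵀ).trace ≤ sNorm (K*M^t)^2 * (C*Cᵀ).trace := trace_sandwich_le _ _
      _ ≤ (κ*(κ*(1-γ)^t))^2 * lam^2 := by
          rw [hWCC]
          exact mul_le_mul (pow_le_pow_left₀ (sNorm_nonneg _) hKM 2) htrW htrW0 (sq_nonneg _)
      _ = κ^4 * lam^2 * r^t := by
          rw [hrdef, pow_right_comm]; ring
  have hentry : ∀ t i j, |f t i j| ≤ κ^2 * lam^2 * r^t := by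
    intro t i j
    calc |f t i j| ≤ (f t).trace := by
          rw [hfG t]; exact entry_abs_le_trace _ i j
      _ ≤ κ^2 * lam^2 * r^t := htr_f t
  have hgeo : Summable (fun t : ℕ => κ^2 * lam^2 * r^t) :=
    (summable_geometric_of_lt_one hr0 hr1).mul_left _
  have hsumm : ∀ i j, Summable fun t => f t i j := fun i j =>
    Summable.of_norm_bounded hgeo (fun t => by
      simpa [Real.norm_eq_abs] using hentry t i j)
  set X : Matrix (Fin d) (Fin d) ℝ := Matrix.of fun i j => ∑' t, f t i j with hXdef
  have hX : HasSum f X := Pi.hasSum.2 fun i => Pi.hasSum.2 fun j => (hsumm i j).hasSum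
  have hstep : ∀ t, f (t+1) = M * f t * Mᵀ := by
    intro t
    simp only [hf, pow_succ' M t, pow_succ Mᵀ t, Matrix.mul_assoc]
  have hXshift : HasSum (fun t => M * f t * Mᵀ) (M * X * Mᵀ) := by
    have h1 := hX.map (sandwichLM M).toAddMonoidHom
      (LinearMap.continuous_of_finiteDimensional _)
    simpa [sandwichLM, Function.comp_def] using h1
  have heq : X = M * X * Mᵀ + W := by
    have h2 : HasSum (fun t => f (t+1)) (M * X * Mᵀ) := by
      simpa [hstep] using hXshift
    have h3 := (hasSum_nat_add_iff (f := f) 1).1 h2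
    have h4 := hX.unique h3
    simpa [Finset.sum_range_one, hf] using h4
  have htrace : HasSum (fun t => (f t).trace) X.trace := by
    have h1 := hX.map (Matrix.traceLinearMap (Fin d) ℝ ℝ).toAddMonoidHom
      (LinearMap.continuous_of_finiteDimensional _)
    simpa [Function.comp_def] using h1
  have htraceK : HasSum (fun t => (K * f t * Kᵀ).trace) (K * X * Kᵀ).trace := by
    have h1 := hX.map ((Matrix.traceLinearMap (Fin k) ℝ ℝ).comp (sandwichLM K)).toAddMonoidHom
      (LinearMap.continuous_of_finiteDimensional ((Matrix.traceLinearMap (Fin k) ℝ ℝ).comp (sandwichLM K)))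
    simpa [sandwichLM, Function.comp_def] using h1
  have hgeo2 : HasSum (fun t : ℕ => (κ^2+κ^4) * lam^2 * r^t)
      ((κ^2+κ^4) * lam^2 * (1-r)⁻¹) :=
    (hasSum_geometric_of_lt_one hr0 hr1).mul_left _
  have hle : X.trace + (K * X * Kᵀ).trace ≤ (κ^2+κ^4) * lam^2 * (1-r)⁻¹ := by
    refine hasSum_le (fun t => ?_) (htrace.add htraceK) hgeo2
    calc (f t).trace + (K * f t * Kᵀ).trace
        ≤ κ^2 * lam^2 * r^t + κ^4 * lam^2 * r^t := add_le_add (htr_f t) (htr_Kf t)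
      _ = (κ^2+κ^4) * lam^2 * r^t := by ring
  refine ⟨X, hX, heq, ?_⟩
  have hκ24 : κ^2 ≤ κ^4 := pow_le_pow_right₀ hκ (by norm_num)
  have hc2 : (κ^2+κ^4) * lam^2 ≤ 2 * κ^4 * lam^2 := by nlinarith [sq_nonneg lam]
  have h1r : γ ≤ 1 - r := by rw [hrdef]; nlinarith
  calc X.trace + (K * X * Kᵀ).trace ≤ (κ^2+κ^4) * lam^2 * (1-r)⁻¹ := hle
    _ = (κ^2+κ^4) * lam^2 / (1-r) := by rw [div_eq_mul_inv]
    _ ≤ 2 * κ^4 * lam^2 / γ := div_le_div₀ (by positivity) hc2 hγ0 h1r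
end
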